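/- Let A be a finite subset of an abelian group G with |A| ≥ 5 and |2∧A| ≥ |A|. Then there is a subset B ⊆ A with |B| = ⌊(|A| + 3)/2⌋ such that |2∧B| ≥ |A|. -/

import Mathlib

open Finset Pointwise

/-- The set of sums of two distinct elements of `A`. -/
def twoSum {G : Type*} [AddCommGroup G] [DecidableEq G] (A : Finset G) : Finset G :=
  ((A ×ˢ A).filter fun p => p.1 ≠ p.2).image fun p => p.1 + p.2

namespace TwoSumProof

variable {G : Type*} [AddCommGroup G] [DecidableEq G]

lemma mem_twoSum {A : Finset G} {v : G} :
    v ∈ twoSum A ↔ ∃ x ∈ A, ∃ y ∈ A, x ≠ y ∧ x + y = v := by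
  simp only [twoSum, mem_image, mem_filter, mem_product, Prod.exists]
  constructor
  · rintro ⟨x, y, ⟨⟨hx, hy⟩, hne⟩, hs⟩
    exact ⟨x, hx, y, hy, hne, hs⟩
  · rintro ⟨x, hx, y, hy, hne, hs⟩
    exact ⟨x, y, ⟨⟨hx, hy⟩, hne⟩, hs⟩

lemma twoSum_mono {A B : Finset G} (h : A ⊆ B) : twoSum A ⊆ twoSum B := by
  intro v hv
  rw [mem_twoSum] at hv ⊢
  obtain ⟨x, hx, y, hy, hne, hs⟩ := hv
  exact ⟨x, h hx, y, h hy, hne, hs⟩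

/-- the edges (2-element subsets) of `A` summing to `v`. -/
def edges (A : Finset G) (v : G) : Finset (Finset G) :=
  (A.powersetCard 2).filter fun e => e.sum id = v

lemma mem_edges {A : Finset G} {v : G} {e : Finset G} :
    e ∈ edges A v ↔ e ⊆ A ∧ e.card = 2 ∧ e.sum id = v := by
  simp [edges, mem_filter, mem_powersetCard, and_assoc]

lemma edge_eq {A : Finset G} {v : G} {e : Finset G} (he : e ∈ edges A v)
    {x : G} (hx : x ∈ e) : e = {x, v - x} := by
  rw [mem_edges] at he
  obtain ⟨-, hcard, hsum⟩ := he
  obtain ⟨a, b, hab, rfl⟩ := Finset.card_eq_two.1 hcard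
  have hsum' : a + b = v := by
    simpa [Finset.sum_pair hab] using hsum
  rcases Finset.mem_insert.1 hx with rfl | hx'
  · have hb : b = v - x := by
      rw [← hsum']; abel
    rw [hb]
  · rw [Finset.mem_singleton] at hx'
    subst hx'
    have ha : a = v - x := by
      rw [← hsum']; abel
    rw [ha, Finset.pair_comm]

end TwoSumProof

namespace TwoSumProof

variable {G : Type*} [AddCommGroup G] [DecidableEq G]

lemma edges_disjoint {A : Finset G} {v : G} {e f : Finset G}
    (he : e ∈ edges A v) (hf : f ∈ edges A v) (hne : e ≠ f) : Disjoint e f := by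
  rw [Finset.disjoint_left]
  intro x hxe hxf
  exact hne ((edge_eq he hxe).trans (edge_eq hf hxf).symm)

lemma mem_twoSum_iff_edges {A B : Finset G} (hBA : B ⊆ A) {v : G} :
    v ∈ twoSum B ↔ ∃ e ∈ edges A v, e ⊆ B := by
  rw [mem_twoSum]
  constructor
  · rintro ⟨x, hx, y, hy, hne, hs⟩
    refine ⟨{x, y}, ?_, ?_⟩
    · rw [mem_edges]
      refine ⟨?_, Finset.card_pair hne, by simpa [Finset.sum_pair hne] using hs⟩
      intro z hz
      rcases Finset.mem_insert.1 hz with rfl | hz'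
      · exact hBA hx
      · rw [Finset.mem_singleton] at hz'; subst hz'; exact hBA hy
    · intro z hz
      rcases Finset.mem_insert.1 hz with rfl | hz'
      · exact hx
      · rw [Finset.mem_singleton] at hz'; subst hz'; exact hy
  · rintro ⟨e, he, heB⟩
    rw [mem_edges] at he
    obtain ⟨-, hcard, hsum⟩ := he
    obtain ⟨a, b, hab, rfl⟩ := Finset.card_eq_two.1 hcard
    refine ⟨a, heB (by simp), b, heB (by simp), hab, ?_⟩
    simpa [Finset.sum_pair hab] using hsum

/-- every 2-subset of A is an edge for its sum, which lies in twoSum A -/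
lemma powersetCard_two_biUnion (A : Finset G) :
    A.powersetCard 2 = (twoSum A).biUnion (fun v => edges A v) := by
  ext e
  simp only [mem_biUnion, mem_powersetCard, mem_edges]
  constructor
  · rintro ⟨heA, hcard⟩
    refine ⟨e.sum id, ?_, heA, hcard, rfl⟩
    obtain ⟨a, b, hab, rfl⟩ := Finset.card_eq_two.1 hcard
    rw [mem_twoSum]
    exact ⟨a, heA (by simp), b, heA (by simp), hab, by simp [Finset.sum_pair hab]⟩
  · rintro ⟨v, -, heA, hcard, -⟩
    exact ⟨heA, hcard⟩

lemma sum_card_edges (A : Finset G) :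
    ∑ v ∈ twoSum A, (edges A v).card = (A.card).choose 2 := by
  rw [← Finset.card_powersetCard 2 A, powersetCard_two_biUnion A, Finset.card_biUnion]
  intro v hv w hw hvw
  show Disjoint (edges A v) (edges A w)
  rw [Finset.disjoint_left]
  intro e hev hew
  rw [mem_edges] at hev hew
  exact hvw (hev.2.2.symm.trans hew.2.2)

end TwoSumProof

namespace TwoSumProof

variable {G : Type*} [AddCommGroup G] [DecidableEq G]

/-- A matching on `A`: a set of pairwise disjoint 2-element subsets of `A`. -/
def IsMatching (A : Finset G) (M : Finset (Finset G)) : Prop :=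
  (∀ e ∈ M, e ⊆ A ∧ e.card = 2) ∧ ∀ e ∈ M, ∀ f ∈ M, e ≠ f → Disjoint e f

lemma isMatching_edges (A : Finset G) (v : G) : IsMatching A (edges A v) := by
  constructor
  · intro e he; rw [mem_edges] at he; exact ⟨he.1, he.2.1⟩
  · intro e he f hf hne; exact edges_disjoint he hf hne

lemma card_biUnion_matching {A : Finset G} {M : Finset (Finset G)}
    (hM : IsMatching A M) : (M.biUnion id).card = 2 * M.card := by
  rw [show (M.biUnion id) = M.biUnion (fun e => e) from rfl,
    Finset.card_biUnion (fun e he f hf hne => hM.2 e he f hf hne),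
    Finset.sum_congr rfl (fun e he => (hM.1 e he).2)]
  simp [Finset.sum_const, mul_comm]

lemma biUnion_matching_subset {A : Finset G} {M : Finset (Finset G)}
    (hM : IsMatching A M) : M.biUnion id ⊆ A := by
  intro x hx
  rw [Finset.mem_biUnion] at hx
  obtain ⟨e, he, hxe⟩ := hx
  exact (hM.1 e he).1 hxe

lemma matching_card_le {A : Finset G} {M : Finset (Finset G)}
    (hM : IsMatching A M) : M.card ≤ A.card / 2 := by
  have h1 : 2 * M.card ≤ A.card := by
    rw [← card_biUnion_matching hM]
    exact Finset.card_le_card (biUnion_matching_subset hM)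
  omega

lemma matching_extend {A : Finset G} (d : ℕ) :
    ∀ (M : Finset (Finset G)), IsMatching A M → d = A.card / 2 - M.card →
    ∃ M', M ⊆ M' ∧ IsMatching A M' ∧ M'.card = A.card / 2 := by
  induction d with
  | zero =>
    intro M hM hd
    exact ⟨M, Finset.Subset.refl M, hM, by have := matching_card_le hM; omega⟩
  | succ d ih =>
    intro M hM hd
    have hlt : M.card < A.card / 2 := by omega
    have hU : 2 ≤ (A \ M.biUnion id).card := by
      rw [Finset.card_sdiff_of_subset (biUnion_matching_subset hM), card_biUnion_matching hM]
      omega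
    obtain ⟨x, hx, y, hy, hxy⟩ := Finset.one_lt_card.1 (by omega : 1 < (A \ M.biUnion id).card)
    have hxA : x ∈ A := (Finset.mem_sdiff.1 hx).1
    have hyA : y ∈ A := (Finset.mem_sdiff.1 hy).1
    have hxU : x ∉ M.biUnion id := (Finset.mem_sdiff.1 hx).2
    have hyU : y ∉ M.biUnion id := (Finset.mem_sdiff.1 hy).2
    have hnew : ({x, y} : Finset G) ∉ M := by
      intro hmem
      exact hxU (Finset.mem_biUnion.2 ⟨{x, y}, hmem, by simp⟩)
    have hM' : IsMatching A (insert ({x, y} : Finset G) M) := by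
      constructor
      · intro e he
        rcases Finset.mem_insert.1 he with rfl | he'
        · refine ⟨?_, Finset.card_pair hxy⟩
          intro z hz
          rcases Finset.mem_insert.1 hz with rfl | hz'
          · exact hxA
          · rw [Finset.mem_singleton] at hz'; subst hz'; exact hyA
        · exact hM.1 e he'
      · have key : ∀ e ∈ M, Disjoint ({x, y} : Finset G) e := by
          intro e he
          rw [Finset.disjoint_left]
          intro z hz hze
          have hzU : z ∈ M.biUnion id := Finset.mem_biUnion.2 ⟨e, he, hze⟩
          rcases Finset.mem_insert.1 hz with rfl | hz'
          · exact hxU hzU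
          · rw [Finset.mem_singleton] at hz'; subst hz'; exact hyU hzU
        intro e he f hf hef
        rcases Finset.mem_insert.1 he with rfl | he' <;>
          rcases Finset.mem_insert.1 hf with rfl | hf'
        · exact absurd rfl hef
        · exact key f hf'
        · exact (key e he').symm
        · exact hM.2 e he' f hf' hef
    obtain ⟨M', hsub, hM'', hcard⟩ := ih _ hM' (by rw [Finset.card_insert_of_notMem hnew]; omega)
    exact ⟨M', (Finset.subset_insert _ M).trans hsub, hM'', hcard⟩

lemma matching_avoid_bound {A B : Finset G} {M : Finset (Finset G)}
    (hM : IsMatching A M) (hBA : B ⊆ A) (havoid : ∀ e ∈ M, ¬ e ⊆ B) :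
    M.card + B.card ≤ A.card := by
  have hsub : M.biUnion (fun e => e \ B) ⊆ A \ B := by
    intro x hx
    rw [Finset.mem_biUnion] at hx
    obtain ⟨e, he, hxe⟩ := hx
    rw [Finset.mem_sdiff] at hxe ⊢
    exact ⟨(hM.1 e he).1 hxe.1, hxe.2⟩
  have hdisj : ∀ e ∈ M, ∀ f ∈ M, e ≠ f → Disjoint (e \ B) (f \ B) :=
    fun e he f hf hef => Finset.disjoint_of_subset_left (Finset.sdiff_subset)
      (Finset.disjoint_of_subset_right (Finset.sdiff_subset) (hM.2 e he f hf hef))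
  have hone : ∀ e ∈ M, 1 ≤ (e \ B).card := by
    intro e he
    rcases Finset.eq_empty_or_nonempty (e \ B) with hemp | hne
    · exfalso
      exact havoid e he (by rwa [Finset.sdiff_eq_empty_iff_subset] at hemp)
    · exact Finset.card_pos.2 hne
  have h1 : M.card ≤ (M.biUnion (fun e => e \ B)).card := by
    rw [Finset.card_biUnion hdisj]
    calc M.card = ∑ _e ∈ M, 1 := by simp
    _ ≤ ∑ e ∈ M, (e \ B).card := Finset.sum_le_sum hone
  have h2 := Finset.card_le_card hsub
  have h3 : (A \ B).card = A.card - B.card := Finset.card_sdiff_of_subset hBA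
  have h4 := Finset.card_le_card hBA
  omega

end TwoSumProof

namespace TwoSumProof

variable {G : Type*} [AddCommGroup G] [DecidableEq G]

/-- number of k-subsets of A containing at least one edge from I -/
def uCount (A : Finset G) (k : ℕ) (I : Finset (Finset G)) : ℕ :=
  ((A.powersetCard k).filter (fun B => ∃ e ∈ I, e ⊆ B)).card

lemma uCount_swap_le (A : Finset G) (k : ℕ) (K : Finset (Finset G)) (e f : Finset G)
    (he2 : e.card = 2) (hf2 : f.card = 2) (heA : e ⊆ A) (hfA : f ⊆ A)
    (hef : Disjoint e f)
    (hKe : ∀ g ∈ K, Disjoint g e) (hKf : ∀ g ∈ K, Disjoint g f) :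
    uCount A k (insert e K) ≤ uCount A k (insert f K) := by
  obtain ⟨a, b, hab, rfl⟩ := Finset.card_eq_two.1 he2
  obtain ⟨c, d, hcd, rfl⟩ := Finset.card_eq_two.1 hf2
  have hdisj : ∀ x : G, x ∈ ({a, b} : Finset G) → x ∈ ({c, d} : Finset G) → False :=
    fun x h1 h2 => Finset.disjoint_left.1 hef h1 h2
  have hac : a ≠ c := fun h => hdisj a (by simp) (by simp [h])
  have had : a ≠ d := fun h => hdisj a (by simp) (by simp [h])
  have hbc : b ≠ c := fun h => hdisj b (by simp) (by simp [h])
  have hbd : b ≠ d := fun h => hdisj b (by simp) (by simp [h])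
  set σ : G ≃ G := (Equiv.swap b d).trans (Equiv.swap a c) with hσdef
  have hσa : σ a = c := by
    simp [hσdef, Equiv.swap_apply_of_ne_of_ne hab had, Equiv.swap_apply_left]
  have hσb : σ b = d := by
    simp [hσdef, Equiv.swap_apply_left, Equiv.swap_apply_of_ne_of_ne had.symm hcd.symm]
  have hσc : σ c = a := by
    simp [hσdef, Equiv.swap_apply_of_ne_of_ne hbc.symm hcd, Equiv.swap_apply_right]
  have hσd : σ d = b := by
    simp [hσdef, Equiv.swap_apply_right, Equiv.swap_apply_of_ne_of_ne hab.symm hbc]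
  have hσother : ∀ x, x ≠ a → x ≠ b → x ≠ c → x ≠ d → σ x = x := by
    intro x h1 h2 h3 h4
    simp [hσdef, Equiv.swap_apply_of_ne_of_ne h2 h4, Equiv.swap_apply_of_ne_of_ne h1 h3]
  have hσA : ∀ x ∈ A, σ x ∈ A := by
    intro x hx
    by_cases h1 : x = a; · subst h1; rw [hσa]; exact hfA (by simp)
    by_cases h2 : x = b; · subst h2; rw [hσb]; exact hfA (by simp)
    by_cases h3 : x = c; · subst h3; rw [hσc]; exact heA (by simp)
    by_cases h4 : x = d; · subst h4; rw [hσd]; exact heA (by simp)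
    rw [hσother x h1 h2 h3 h4]; exact hx
  have hσe : ({a, b} : Finset G).image σ = {c, d} := by
    rw [Finset.image_insert, Finset.image_singleton, hσa, hσb]
  have hσK : ∀ g ∈ K, g.image σ = g := by
    intro g hg
    have : ∀ x ∈ g, σ x = x := by
      intro x hx
      refine hσother x ?_ ?_ ?_ ?_
      · exact fun h => (Finset.disjoint_left.1 (hKe g hg) hx) (by simp [h])
      · exact fun h => (Finset.disjoint_left.1 (hKe g hg) hx) (by simp [h])
      · exact fun h => (Finset.disjoint_left.1 (hKf g hg) hx) (by simp [h])
      · exact fun h => (Finset.disjoint_left.1 (hKf g hg) hx) (by simp [h])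
    rw [Finset.image_congr (fun x hx => this x hx)]; exact Finset.image_id
  apply Finset.card_le_card_of_injOn (fun B => B.image σ)
  · intro B hB
    rw [Finset.mem_coe, Finset.mem_filter, Finset.mem_powersetCard] at hB ⊢
    obtain ⟨⟨hBA, hBcard⟩, g, hg, hgB⟩ := hB
    refine ⟨⟨?_, ?_⟩, ?_⟩
    · intro x hx
      rw [Finset.mem_image] at hx
      obtain ⟨y, hy, rfl⟩ := hx
      exact hσA y (hBA hy)
    · rw [Finset.card_image_of_injective _ σ.injective]; exact hBcard
    · rcases Finset.mem_insert.1 hg with rfl | hg'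
      · exact ⟨{c, d}, Finset.mem_insert_self _ _, hσe ▸ Finset.image_subset_image hgB⟩
      · exact ⟨g, Finset.mem_insert_of_mem hg',
          (hσK g hg') ▸ Finset.image_subset_image hgB⟩
  · intro B1 _ B2 _ himg
    have := Finset.image_injective σ.injective
    exact this himg

lemma uCount_swap (A : Finset G) (k : ℕ) (K : Finset (Finset G)) (e f : Finset G)
    (he2 : e.card = 2) (hf2 : f.card = 2) (heA : e ⊆ A) (hfA : f ⊆ A)
    (hef : Disjoint e f)
    (hKe : ∀ g ∈ K, Disjoint g e) (hKf : ∀ g ∈ K, Disjoint g f) :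
    uCount A k (insert e K) = uCount A k (insert f K) :=
  le_antisymm (uCount_swap_le A k K e f he2 hf2 heA hfA hef hKe hKf)
    (uCount_swap_le A k K f e hf2 he2 hfA heA hef.symm hKf hKe)

end TwoSumProof

namespace TwoSumProof

variable {G : Type*} [AddCommGroup G] [DecidableEq G]

lemma uCount_symm_aux (A : Finset G) (k : ℕ) (M : Finset (Finset G))
    (hM : IsMatching A M) :
    ∀ n (I J : Finset (Finset G)), I ⊆ M → J ⊆ M → I.card = J.card →
    (I \ J).card = n → uCount A k I = uCount A k J := by
  intro n
  induction n with
  | zero =>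
    intro I J hIM hJM hcard hd
    have hsub : I ⊆ J := by
      intro g hg
      by_contra hgJ
      have : g ∈ I \ J := Finset.mem_sdiff.2 ⟨hg, hgJ⟩
      rw [Finset.card_eq_zero] at hd
      simp [hd] at this
    rw [Finset.eq_of_subset_of_card_le hsub (le_of_eq hcard.symm)]
  | succ n ih =>
    intro I J hIM hJM hcard hd
    have hne : (I \ J).Nonempty := by
      rw [← Finset.card_pos, hd]; omega
    obtain ⟨e, he⟩ := hne
    have heI : e ∈ I := (Finset.mem_sdiff.1 he).1
    have heJ : e ∉ J := (Finset.mem_sdiff.1 he).2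
    have hJI : (J \ I).Nonempty := by
      by_contra hempty
      rw [Finset.not_nonempty_iff_eq_empty, Finset.sdiff_eq_empty_iff_subset] at hempty
      have : J = I := Finset.eq_of_subset_of_card_le hempty (le_of_eq hcard)
      subst this
      simp at he
    obtain ⟨f, hf⟩ := hJI
    have hfJ : f ∈ J := (Finset.mem_sdiff.1 hf).1
    have hfI : f ∉ I := (Finset.mem_sdiff.1 hf).2
    have hefne : e ≠ f := fun h => hfI (h ▸ heI)
    have heM : e ∈ M := hIM heI
    have hfM : f ∈ M := hJM hfJ
    have hKsub : I.erase e ⊆ M := (Finset.erase_subset e I).trans hIM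
    have hfK : f ∉ I.erase e := fun h => hfI (Finset.mem_of_mem_erase h)
    have step : uCount A k I = uCount A k (insert f (I.erase e)) := by
      conv_lhs => rw [← Finset.insert_erase heI]
      exact uCount_swap A k (I.erase e) e f (hM.1 e heM).2 (hM.1 f hfM).2
        (hM.1 e heM).1 (hM.1 f hfM).1 (hM.2 e heM f hfM hefne)
        (fun g hg => hM.2 g (hKsub hg) e heM (Finset.ne_of_mem_erase hg))
        (fun g hg => hM.2 g (hKsub hg) f hfM (fun h => hfK (h ▸ hg)))
    rw [step]
    apply ih
    · intro g hg
      rcases Finset.mem_insert.1 hg with rfl | hg'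
      · exact hfM
      · exact hKsub hg'
    · exact hJM
    · rw [Finset.card_insert_of_notMem hfK, Finset.card_erase_of_mem heI]
      have : 1 ≤ I.card := Finset.card_pos.2 ⟨e, heI⟩
      omega
    · have h1 : insert f (I.erase e) \ J = (I.erase e) \ J :=
        Finset.insert_sdiff_of_mem _ hfJ
      have h2 : (I.erase e) \ J = (I \ J).erase e := by
        ext g
        simp only [Finset.mem_sdiff, Finset.mem_erase]
        tauto
      rw [h1, h2, Finset.card_erase_of_mem he, hd]; omega

lemma uCount_symm (A : Finset G) (k : ℕ) (M : Finset (Finset G))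
    (hM : IsMatching A M) (I J : Finset (Finset G)) (hIM : I ⊆ M) (hJM : J ⊆ M)
    (hcard : I.card = J.card) : uCount A k I = uCount A k J :=
  uCount_symm_aux A k M hM (I \ J).card I J hIM hJM hcard rfl

end TwoSumProof

namespace TwoSumProof

variable {G : Type*} [AddCommGroup G] [DecidableEq G]

lemma double_count (A : Finset G) (k r : ℕ) (M : Finset (Finset G)) :
    (∑ I ∈ M.powersetCard r, uCount A k I)
      + ∑ B ∈ A.powersetCard k, ((M.filter (fun e => ¬ e ⊆ B)).card).choose r
      = (A.powersetCard k).card * (M.card).choose r := by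
  have key : ∀ B : Finset G,
      ((M.powersetCard r).filter (fun I => ¬ ∃ e ∈ I, e ⊆ B))
        = (M.filter (fun e => ¬ e ⊆ B)).powersetCard r := by
    intro B
    ext I
    simp only [Finset.mem_filter, Finset.mem_powersetCard]
    constructor
    · rintro ⟨⟨hIM, hIr⟩, hno⟩
      refine ⟨fun x hx => Finset.mem_filter.2 ⟨hIM hx, fun hsub => hno ⟨x, hx, hsub⟩⟩, hIr⟩
    · rintro ⟨hIf, hIr⟩
      refine ⟨⟨fun x hx => (Finset.mem_filter.1 (hIf hx)).1, hIr⟩, ?_⟩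
      rintro ⟨x, hx, hsub⟩
      exact (Finset.mem_filter.1 (hIf hx)).2 hsub
  have h2 : ∑ I ∈ M.powersetCard r, uCount A k I
      = ∑ B ∈ A.powersetCard k,
          ((M.powersetCard r).filter (fun I => ∃ e ∈ I, e ⊆ B)).card := by
    simp only [uCount, Finset.card_filter]
    exact Finset.sum_comm
  rw [h2, ← Finset.sum_add_distrib]
  have h3 : ∀ B ∈ A.powersetCard k,
      ((M.powersetCard r).filter (fun I => ∃ e ∈ I, e ⊆ B)).card
        + ((M.filter (fun e => ¬ e ⊆ B)).card).choose r = (M.card).choose r := by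
    intro B _
    rw [← Finset.card_powersetCard r M, ← Finset.card_powersetCard r, ← key B]
    exact Finset.card_filter_add_card_filter_not _
  rw [Finset.sum_congr rfl h3, Finset.sum_const, smul_eq_mul]

end TwoSumProof

namespace TwoSumProof

lemma choose_mul_id (H r : ℕ) (hr : 1 ≤ r) (hH : 1 ≤ H) :
    r * H.choose r = H * (H - 1).choose (r - 1) := by
  obtain ⟨H', rfl⟩ : ∃ H', H = H' + 1 := ⟨H - 1, by omega⟩
  obtain ⟨r', rfl⟩ : ∃ r', r = r' + 1 := ⟨r - 1, by omega⟩
  simp only [Nat.add_sub_cancel]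
  rw [mul_comm]
  exact (Nat.add_one_mul_choose_eq H' r').symm ▸ (Nat.add_one_mul_choose_eq H' r')

lemma pascal (H r : ℕ) (hr : 1 ≤ r) (hH : 1 ≤ H) :
    H.choose r = (H - 1).choose r + (H - 1).choose (r - 1) := by
  obtain ⟨H', rfl⟩ : ∃ H', H = H' + 1 := ⟨H - 1, by omega⟩
  obtain ⟨r', rfl⟩ : ∃ r', r = r' + 1 := ⟨r - 1, by omega⟩
  simp only [Nat.add_sub_cancel]
  rw [Nat.choose_succ_succ']
  omega

lemma core_pointwise (H r t : ℕ) (hr : 1 ≤ r) (ht : 1 ≤ t) (htH : t ≤ H) :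
    H * ((H - t).choose r) + r * H.choose r ≤ H * H.choose r := by
  have h1 : (H - t).choose r ≤ (H - 1).choose r :=
    Nat.choose_le_choose r (by omega)
  have h2 : H * H.choose r = H * ((H - 1).choose r) + r * H.choose r := by
    conv_lhs => rw [pascal H r hr (by omega)]
    rw [Nat.mul_add, choose_mul_id H r hr (by omega)]
  calc H * ((H - t).choose r) + r * H.choose r
      ≤ H * ((H - 1).choose r) + r * H.choose r := by
        exact Nat.add_le_add_right (Nat.mul_le_mul_left H h1) _
    _ = H * H.choose r := h2.symm

lemma bonus_pointwise (H r t : ℕ) (hr : 1 ≤ r) (ht : 2 ≤ t) (htH : t ≤ H) :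
    H * ((H - t).choose r) + r * H.choose r + H * ((H - 2).choose (r - 1))
      ≤ H * H.choose r := by
  have h1 : (H - t).choose r ≤ (H - 2).choose r :=
    Nat.choose_le_choose r (by omega)
  have h2 : H * H.choose r
      = H * ((H - 2).choose r) + H * ((H - 2).choose (r - 1)) + r * H.choose r := by
    have h3 : (H - 1).choose r = (H - 2).choose r + (H - 2).choose (r - 1) := by
      have := pascal (H - 1) r hr (by omega)
      rwa [show H - 1 - 1 = H - 2 by omega] at this
    conv_lhs => rw [pascal H r hr (by omega), h3]
    rw [choose_mul_id H r hr (by omega)]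
    ring
  calc H * ((H - t).choose r) + r * H.choose r + H * ((H - 2).choose (r - 1))
      ≤ H * ((H - 2).choose r) + r * H.choose r + H * ((H - 2).choose (r - 1)) := by
        exact Nat.add_le_add_right (Nat.add_le_add_right (Nat.mul_le_mul_left H h1) _) _
    _ = H * H.choose r := by rw [h2]; ring

lemma sub_choose_id (m j : ℕ) (hj : j + 1 ≤ m) :
    (m - j) * m.choose j = m * (m - 1).choose j := by
  have h1 : m.choose j = m.choose (m - j) := by
    rw [← Nat.choose_symm (by omega : j ≤ m)]
  have h2 : (m - j) * m.choose (m - j) = m * (m - 1).choose (m - j - 1) :=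
    choose_mul_id m (m - j) (by omega) (by omega)
  have h3 : (m - 1).choose (m - j - 1) = (m - 1).choose j := by
    have hsy := Nat.choose_symm (by omega : m - j - 1 ≤ m - 1)
    rw [show (m - 1) - (m - j - 1) = j by omega] at hsy
    exact hsy.symm
  rw [h1, h2, h3]

lemma conv_lemma (H r : ℕ) (hr : 1 ≤ r) (hrH : r + 1 ≤ H) :
    H.choose r ≤ H * ((H - 2).choose (r - 1)) := by
  have key : r * (H - r) * H.choose r = H * (H - 1) * ((H - 2).choose (r - 1)) := by
    have h1 : r * H.choose r = H * (H - 1).choose (r - 1) :=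
      choose_mul_id H r hr (by omega)
    have h2 : (H - 1 - (r - 1)) * (H - 1).choose (r - 1)
        = (H - 1) * ((H - 1 - 1).choose (r - 1)) :=
      sub_choose_id (H - 1) (r - 1) (by omega)
    have h3 : H - 1 - (r - 1) = H - r := by omega
    have h4 : H - 1 - 1 = H - 2 := by omega
    rw [h3, h4] at h2
    calc r * (H - r) * H.choose r = (H - r) * (r * H.choose r) := by ring
      _ = (H - r) * (H * (H - 1).choose (r - 1)) := by rw [h1]
      _ = H * ((H - r) * (H - 1).choose (r - 1)) := by ring
      _ = H * ((H - 1) * ((H - 2).choose (r - 1))) := by rw [h2]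
      _ = H * (H - 1) * ((H - 2).choose (r - 1)) := by ring
  have hprod : H - 1 ≤ r * (H - r) := by
    obtain ⟨r', rfl⟩ : ∃ r', r = r' + 1 := ⟨r - 1, by omega⟩
    have hs : 1 ≤ H - (r' + 1) := by omega
    have : r' ≤ r' * (H - (r' + 1)) := Nat.le_mul_of_pos_right r' (by omega)
    have hexp : (r' + 1) * (H - (r' + 1)) = (H - (r' + 1)) + r' * (H - (r' + 1)) := by
      ring
    omega
  have hpos : 0 < H - 1 := by omega
  have step : (H - 1) * H.choose r ≤ (H - 1) * (H * ((H - 2).choose (r - 1))) := by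
    calc (H - 1) * H.choose r ≤ (r * (H - r)) * H.choose r :=
          Nat.mul_le_mul_right _ hprod
      _ = H * (H - 1) * ((H - 2).choose (r - 1)) := key
      _ = (H - 1) * (H * ((H - 2).choose (r - 1))) := by ring
  exact Nat.le_of_mul_le_mul_left step hpos

lemma choose_ge_self (m j : ℕ) (hj : 1 ≤ j) (hjm : j + 1 ≤ m) :
    m ≤ m.choose j := by
  induction m with
  | zero => omega
  | succ m ih =>
    rcases Nat.eq_or_lt_of_le hj with rfl | hj2
    · simp
    · have hj1 : 1 ≤ j - 1 := by omega
      rcases Nat.lt_or_ge (j + 1) m with hlt | hge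
      · have h1 : m ≤ m.choose j := ih (by omega)
        have h2 : 1 ≤ m.choose (j - 1) := Nat.choose_pos (by omega)
        have h3 : (m + 1).choose j = m.choose j + m.choose (j - 1) := by
          have := pascal (m + 1) j (by omega) (by omega)
          simpa using this
        omega
      · -- j + 1 = m or j + 1 = m + 1... j + 1 ≤ m + 1 and j + 1 ≥ m: j = m - 1 or j = m
        have hjm' : j = m ∨ j + 1 = m := by omega
        rcases hjm' with rfl | hjm''
        · -- j = m : (m+1).choose m = m+1
          rw [Nat.choose_succ_self_right]
        · -- j = m - 1: (m+1).choose (m-1) = C(m+1,2) = m(m+1)/2 ≥ m+1 for m ≥ 3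
          have h3 : (m + 1).choose j = m.choose j + m.choose (j - 1) := by
            have := pascal (m + 1) j (by omega) (by omega)
            simpa using this
          have h1 : m ≤ m.choose j := ih (by omega)
          have h2 : 1 ≤ m.choose (j - 1) := Nat.choose_pos (by omega)
          omega

end TwoSumProof

namespace TwoSumProof

variable {G : Type*} [AddCommGroup G] [DecidableEq G]

lemma t_pos (A : Finset G) (k : ℕ) (Mstar : Finset (Finset G))
    (hMat : IsMatching A Mstar) (hkn : A.card + 1 ≤ Mstar.card + k) :
    ∀ B ∈ A.powersetCard k, 1 ≤ (Mstar.filter (fun e => e ⊆ B)).card := by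
  intro B hB
  obtain ⟨hBA, hBk⟩ := Finset.mem_powersetCard.1 hB
  by_contra hcon
  push_neg at hcon
  have hzero : (Mstar.filter (fun e => e ⊆ B)).card = 0 := by omega
  rw [Finset.card_eq_zero, Finset.filter_eq_empty_iff] at hzero
  have := matching_avoid_bound hMat hBA hzero
  omega

lemma key_core (A : Finset G) (k : ℕ) (Mstar M : Finset (Finset G))
    (hMat : IsMatching A Mstar) (hsub : M ⊆ Mstar)
    (hkn : A.card + 1 ≤ Mstar.card + k) (hr1 : 1 ≤ M.card) :
    M.card * (A.powersetCard k).card ≤ Mstar.card * uCount A k M := by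
  set H := Mstar.card with hH
  set r := M.card with hr
  set N := (A.powersetCard k).card with hN
  set c := H.choose r with hc
  have hrH : r ≤ H := Finset.card_le_card hsub
  have hcpos : 0 < c := Nat.choose_pos hrH
  have idn := double_count A k r Mstar
  have hsymm : ∀ I ∈ Mstar.powersetCard r, uCount A k I = uCount A k M := by
    intro I hI
    obtain ⟨hIM, hIr⟩ := Finset.mem_powersetCard.1 hI
    exact uCount_symm A k Mstar hMat I M hIM hsub (by rw [hIr])
  rw [Finset.sum_congr rfl hsymm, Finset.sum_const, smul_eq_mul,
    Finset.card_powersetCard] at idn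
  -- idn : c * uCount + ∑ C(s_B, r) = N * c
  set u := uCount A k M with hu
  set X := ∑ B ∈ A.powersetCard k, ((Mstar.filter (fun e => ¬ e ⊆ B)).card).choose r with hX
  -- pointwise bound summed
  have hpt : ∀ B ∈ A.powersetCard k,
      H * (((Mstar.filter (fun e => ¬ e ⊆ B)).card).choose r) + r * c ≤ H * c := by
    intro B hB
    have ht1 : 1 ≤ (Mstar.filter (fun e => e ⊆ B)).card := t_pos A k Mstar hMat hkn B hB
    have hts : (Mstar.filter (fun e => e ⊆ B)).card
        + (Mstar.filter (fun e => ¬ e ⊆ B)).card = H :=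
      Finset.card_filter_add_card_filter_not _
    have htH : (Mstar.filter (fun e => e ⊆ B)).card ≤ H := by omega
    have hs : (Mstar.filter (fun e => ¬ e ⊆ B)).card
        = H - (Mstar.filter (fun e => e ⊆ B)).card := by omega
    rw [hs]
    exact core_pointwise H r _ hr1 ht1 htH
  have hsum : H * X + N * (r * c) ≤ N * (H * c) := by
    have h1 := Finset.sum_le_sum hpt
    rw [Finset.sum_add_distrib, ← Finset.mul_sum] at h1
    simp only [Finset.sum_const, smul_eq_mul] at h1
    exact h1
  have hmulid : H * (c * u + X) = H * (N * c) := by rw [idn]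
  have hexp : H * (c * u) + H * X = H * (N * c) := by
    rw [← Nat.mul_add]; exact hmulid
  have hcomm1 : N * (H * c) = H * (N * c) := by ring
  have hcomm2 : H * (c * u) = c * (H * u) := by ring
  have hcomm3 : N * (r * c) = c * (r * N) := by ring
  have hfinal : c * (r * N) ≤ c * (H * u) := by omega
  exact Nat.le_of_mul_le_mul_left hfinal hcpos

end TwoSumProof

namespace TwoSumProof

variable {G : Type*} [AddCommGroup G] [DecidableEq G]

lemma key_bonus (A : Finset G) (k : ℕ) (Mstar M : Finset (Finset G))
    (hMat : IsMatching A Mstar) (hsub : M ⊆ Mstar)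
    (hkn : A.card + 1 ≤ Mstar.card + k) (hr1 : 1 ≤ M.card)
    (hrH : M.card + 1 ≤ Mstar.card)
    (hY : Mstar.card ≤ ((A.powersetCard k).filter
          (fun B => 2 ≤ (Mstar.filter (fun e => e ⊆ B)).card)).card) :
    M.card * (A.powersetCard k).card + Mstar.card ≤ Mstar.card * uCount A k M := by
  set H := Mstar.card with hH
  set r := M.card with hr
  set N := (A.powersetCard k).card with hN
  set c := H.choose r with hc
  set c2 := (H - 2).choose (r - 1) with hc2
  set Y := ((A.powersetCard k).filter
      (fun B => 2 ≤ (Mstar.filter (fun e => e ⊆ B)).card)).card with hYdef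
  have hrHle : r ≤ H := Finset.card_le_card hsub
  have hcpos : 0 < c := Nat.choose_pos hrHle
  have idn := double_count A k r Mstar
  have hsymm : ∀ I ∈ Mstar.powersetCard r, uCount A k I = uCount A k M := by
    intro I hI
    obtain ⟨hIM, hIr⟩ := Finset.mem_powersetCard.1 hI
    exact uCount_symm A k Mstar hMat I M hIM hsub (by rw [hIr])
  rw [Finset.sum_congr rfl hsymm, Finset.sum_const, smul_eq_mul,
    Finset.card_powersetCard] at idn
  set u := uCount A k M with hu
  set X := ∑ B ∈ A.powersetCard k, ((Mstar.filter (fun e => ¬ e ⊆ B)).card).choose r with hX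
  have hpt : ∀ B ∈ A.powersetCard k,
      H * (((Mstar.filter (fun e => ¬ e ⊆ B)).card).choose r) + r * c
        + (if 2 ≤ (Mstar.filter (fun e => e ⊆ B)).card then H * c2 else 0) ≤ H * c := by
    intro B hB
    have ht1 : 1 ≤ (Mstar.filter (fun e => e ⊆ B)).card := t_pos A k Mstar hMat hkn B hB
    have hts : (Mstar.filter (fun e => e ⊆ B)).card
        + (Mstar.filter (fun e => ¬ e ⊆ B)).card = H :=
      Finset.card_filter_add_card_filter_not _
    have htH : (Mstar.filter (fun e => e ⊆ B)).card ≤ H := by omega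
    have hs : (Mstar.filter (fun e => ¬ e ⊆ B)).card
        = H - (Mstar.filter (fun e => e ⊆ B)).card := by omega
    rw [hs]
    split_ifs with h2
    · exact bonus_pointwise H r _ hr1 h2 htH
    · rw [Nat.add_zero]
      exact core_pointwise H r _ hr1 ht1 htH
  have hsum : H * X + N * (r * c) + Y * (H * c2) ≤ N * (H * c) := by
    have h1 := Finset.sum_le_sum hpt
    rw [Finset.sum_add_distrib, Finset.sum_add_distrib, ← Finset.mul_sum,
      Finset.sum_ite, Finset.sum_const, Finset.sum_const_zero] at h1
    simp only [Finset.sum_const, smul_eq_mul, Nat.add_zero] at h1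
    exact h1
  have hexp : H * (c * u) + H * X = H * (N * c) := by
    rw [← Nat.mul_add, idn]
  have hcomm1 : N * (H * c) = H * (N * c) := by ring
  have hcomm2 : H * (c * u) = c * (H * u) := by ring
  have hcomm3 : N * (r * c) = c * (r * N) := by ring
  have hch : c ≤ H * c2 := conv_lemma H r hr1 hrH
  have hYH : H * (H * c2) ≤ Y * (H * c2) := Nat.mul_le_mul_right _ hY
  have hHc : H * c ≤ H * (H * c2) := Nat.mul_le_mul_left _ hch
  have hcomm4 : H * c = c * H := by ring
  have hfinal : c * (r * N) + c * H ≤ c * (H * u) := by omega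
  have : c * (r * N + H) ≤ c * (H * u) := by rw [Nat.mul_add]; exact hfinal
  exact Nat.le_of_mul_le_mul_left this hcpos

end TwoSumProof

namespace TwoSumProof

variable {G : Type*} [AddCommGroup G] [DecidableEq G]

lemma Y_ge_H_big (A : Finset G) (k : ℕ) (Mstar : Finset (Finset G))
    (hMat : IsMatching A Mstar) (hMcard : Mstar.card = A.card / 2)
    (hk : k = (A.card + 3) / 2) (hA : 7 ≤ A.card) :
    Mstar.card ≤ ((A.powersetCard k).filter
      (fun B => 2 ≤ (Mstar.filter (fun e => e ⊆ B)).card)).card := by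
  obtain ⟨e1, he1, e2, he2, hee⟩ := Finset.one_lt_card.1
    (by omega : 1 < Mstar.card)
  have hd12 : Disjoint e1 e2 := hMat.2 e1 he1 e2 he2 hee
  have hc1 : e1.card = 2 := (hMat.1 e1 he1).2
  have hc2 : e2.card = 2 := (hMat.1 e2 he2).2
  have hcu : (e1 ∪ e2).card = 4 := by
    rw [Finset.card_union_of_disjoint hd12, hc1, hc2]
  have huA : e1 ∪ e2 ⊆ A := Finset.union_subset (hMat.1 e1 he1).1 (hMat.1 e2 he2).1
  have hstep : (A \ (e1 ∪ e2)).card = A.card - 4 := by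
    rw [Finset.card_sdiff_of_subset huA, hcu]
  have hinj : ((A \ (e1 ∪ e2)).powersetCard (k - 4)).card
      ≤ ((A.powersetCard k).filter
        (fun B => 2 ≤ (Mstar.filter (fun e => e ⊆ B)).card)).card := by
    apply Finset.card_le_card_of_injOn (fun C => C ∪ (e1 ∪ e2))
    · intro C hC
      obtain ⟨hCsub, hCcard⟩ := Finset.mem_powersetCard.1 hC
      have hCdisj : Disjoint C (e1 ∪ e2) := by
        rw [Finset.disjoint_left]
        intro x hxC hxU
        exact (Finset.mem_sdiff.1 (hCsub hxC)).2 hxU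
      rw [Finset.mem_coe, Finset.mem_filter, Finset.mem_powersetCard]
      refine ⟨⟨?_, ?_⟩, ?_⟩
      · exact Finset.union_subset (hCsub.trans Finset.sdiff_subset) huA
      · rw [Finset.card_union_of_disjoint hCdisj, hCcard, hcu]; omega
      · have hsub2 : ({e1, e2} : Finset (Finset G))
            ⊆ Mstar.filter (fun e => e ⊆ C ∪ (e1 ∪ e2)) := by
          intro g hg
          rcases Finset.mem_insert.1 hg with rfl | hg'
          · exact Finset.mem_filter.2 ⟨he1,
              Finset.subset_union_left.trans Finset.subset_union_right⟩
          · rw [Finset.mem_singleton] at hg'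
            subst hg'
            exact Finset.mem_filter.2 ⟨he2,
              Finset.subset_union_right.trans Finset.subset_union_right⟩
        calc 2 = ({e1, e2} : Finset (Finset G)).card := (Finset.card_pair hee).symm
          _ ≤ _ := Finset.card_le_card hsub2
    · intro C1 hC1 C2 hC2 heq
      have hd1 : Disjoint C1 (e1 ∪ e2) := by
        rw [Finset.disjoint_left]
        intro x hxC hxU
        exact (Finset.mem_sdiff.1 ((Finset.mem_powersetCard.1 hC1).1 hxC)).2 hxU
      have hd2 : Disjoint C2 (e1 ∪ e2) := by
        rw [Finset.disjoint_left]
        intro x hxC hxU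
        exact (Finset.mem_sdiff.1 ((Finset.mem_powersetCard.1 hC2).1 hxC)).2 hxU
      have heq' : C1 ∪ (e1 ∪ e2) = C2 ∪ (e1 ∪ e2) := heq
      ext x
      constructor
      · intro hx
        have hx2 : x ∈ C2 ∪ (e1 ∪ e2) := heq' ▸ Finset.mem_union_left _ hx
        rcases Finset.mem_union.1 hx2 with h | h
        · exact h
        · exact absurd h (Finset.disjoint_left.1 hd1 hx)
      · intro hx
        have hx2 : x ∈ C1 ∪ (e1 ∪ e2) := heq'.symm ▸ Finset.mem_union_left _ hx
        rcases Finset.mem_union.1 hx2 with h | h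
        · exact h
        · exact absurd h (Finset.disjoint_left.1 hd2 hx)
  rw [Finset.card_powersetCard, hstep] at hinj
  have h1 : 1 ≤ k - 4 := by omega
  have h2 : (k - 4) + 1 ≤ A.card - 4 := by omega
  have h3 : A.card - 4 ≤ (A.card - 4).choose (k - 4) :=
    choose_ge_self (A.card - 4) (k - 4) h1 h2
  omega

lemma Y_ge_H_six (A : Finset G) (k : ℕ) (Mstar : Finset (Finset G))
    (hMat : IsMatching A Mstar) (hMcard : Mstar.card = 3)
    (hk : k = 4) (hA : A.card = 6) :
    Mstar.card ≤ ((A.powersetCard k).filter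
      (fun B => 2 ≤ (Mstar.filter (fun e => e ⊆ B)).card)).card := by
  have hU : Mstar.biUnion id = A := by
    apply Finset.eq_of_subset_of_card_le (biUnion_matching_subset hMat)
    rw [card_biUnion_matching hMat, hMcard, hA]
  apply Finset.card_le_card_of_injOn (fun e => A \ e)
  · intro e he
    have heA : e ⊆ A := (hMat.1 e he).1
    have hec : e.card = 2 := (hMat.1 e he).2
    rw [Finset.mem_coe, Finset.mem_filter, Finset.mem_powersetCard]
    refine ⟨⟨Finset.sdiff_subset, ?_⟩, ?_⟩
    · rw [Finset.card_sdiff_of_subset heA, hec, hA, hk]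
    · have hsub : Mstar.erase e ⊆ Mstar.filter (fun f => f ⊆ A \ e) := by
        intro f hf
        have hfM : f ∈ Mstar := Finset.mem_of_mem_erase hf
        have hfe : f ≠ e := Finset.ne_of_mem_erase hf
        refine Finset.mem_filter.2 ⟨hfM, ?_⟩
        intro x hxf
        rw [Finset.mem_sdiff]
        exact ⟨(hMat.1 f hfM).1 hxf,
          fun hxe => Finset.disjoint_left.1 (hMat.2 f hfM e he hfe) hxf hxe⟩
      calc 2 = (Mstar.erase e).card := by rw [Finset.card_erase_of_mem he, hMcard]
        _ ≤ _ := Finset.card_le_card hsub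
  · intro f1 hf1 f2 hf2 heq
    have h1 : f1 ⊆ A := (hMat.1 f1 hf1).1
    have h2 : f2 ⊆ A := (hMat.1 f2 hf2).1
    have k1 : A \ (A \ f1) = f1 := by
      rw [Finset.sdiff_sdiff_self_left, Finset.inter_eq_right.2 h1]
    have k2 : A \ (A \ f2) = f2 := by
      rw [Finset.sdiff_sdiff_self_left, Finset.inter_eq_right.2 h2]
    have heq' : A \ f1 = A \ f2 := heq
    rw [← k1, ← k2, heq']

end TwoSumProof

namespace TwoSumProof

variable {G : Type*} [AddCommGroup G] [DecidableEq G]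

lemma cov_eq_uCount (A : Finset G) (k : ℕ) (v : G) :
    ((A.powersetCard k).filter (fun B => v ∈ twoSum B)).card
      = uCount A k (edges A v) := by
  unfold uCount
  congr 1
  apply Finset.filter_congr
  intro B hB
  have hBA := (Finset.mem_powersetCard.1 hB).1
  exact mem_twoSum_iff_edges hBA

lemma one_le_edges_card {A : Finset G} {v : G} (hv : v ∈ twoSum A) :
    1 ≤ (edges A v).card := by
  obtain ⟨e, he, -⟩ := (mem_twoSum_iff_edges (Finset.Subset.refl A)).1 hv
  exact Finset.card_pos.2 ⟨e, he⟩

lemma cov_core (A : Finset G) (hA : 5 ≤ A.card) (v : G) (hv : v ∈ twoSum A) :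
    (edges A v).card * (A.powersetCard ((A.card + 3) / 2)).card
      ≤ (A.card / 2) * ((A.powersetCard ((A.card + 3) / 2)).filter
          (fun B => v ∈ twoSum B)).card := by
  obtain ⟨Mstar, hsub, hMat, hMcard⟩ :=
    matching_extend (A.card / 2 - (edges A v).card) (edges A v)
      (isMatching_edges A v) rfl
  rw [cov_eq_uCount]
  rw [← hMcard]
  apply key_core A _ Mstar (edges A v) hMat hsub
  · rw [hMcard]; omega
  · exact one_le_edges_card hv

lemma cov_bonus (A : Finset G) (hA : 6 ≤ A.card) (v : G) (hv : v ∈ twoSum A)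
    (hr : (edges A v).card + 1 ≤ A.card / 2) :
    (edges A v).card * (A.powersetCard ((A.card + 3) / 2)).card + A.card / 2
      ≤ (A.card / 2) * ((A.powersetCard ((A.card + 3) / 2)).filter
          (fun B => v ∈ twoSum B)).card := by
  obtain ⟨Mstar, hsub, hMat, hMcard⟩ :=
    matching_extend (A.card / 2 - (edges A v).card) (edges A v)
      (isMatching_edges A v) rfl
  rw [cov_eq_uCount]
  rw [← hMcard]
  apply key_bonus A _ Mstar (edges A v) hMat hsub
  · rw [hMcard]; omega
  · exact one_le_edges_card hv
  · rw [hMcard]; exact hr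
  · rcases Nat.lt_or_ge A.card 7 with h7 | h7
    · have hA6 : A.card = 6 := by omega
      exact Y_ge_H_six A _ Mstar hMat (by rw [hMcard, hA6]) (by rw [hA6]) hA6
    · exact Y_ge_H_big A _ Mstar hMat hMcard rfl h7

end TwoSumProof

namespace TwoSumProof

lemma choose_two_odd (n : ℕ) (h : n % 2 = 1) : n.choose 2 = n * (n / 2) := by
  obtain ⟨m, rfl⟩ : ∃ m, n = 2 * m + 1 := ⟨n / 2, by omega⟩
  rw [Nat.choose_two_right]
  rw [show 2 * m + 1 - 1 = 2 * m by omega]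
  rw [show (2 * m + 1) * (2 * m) = ((2 * m + 1) * m) * 2 by ring]
  rw [Nat.mul_div_cancel _ (by omega : 0 < 2)]
  rw [show (2 * m + 1) / 2 = m by omega]

lemma choose_two_even (n : ℕ) (h : n % 2 = 0) : n.choose 2 = (n - 1) * (n / 2) := by
  obtain ⟨m, rfl⟩ : ∃ m, n = 2 * m := ⟨n / 2, by omega⟩
  rw [Nat.choose_two_right]
  rw [show 2 * m * (2 * m - 1) = ((2 * m - 1) * m) * 2 by
    rw [show (2 * m - 1) * m * 2 = (2 * m - 1) * (m * 2) by ring]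
    rw [show m * 2 = 2 * m by ring]
    ring]
  rw [Nat.mul_div_cancel _ (by omega : 0 < 2)]
  rw [show 2 * m / 2 = m by omega]

variable {G : Type*} [AddCommGroup G] [DecidableEq G]

theorem main (A : Finset G) (hA : 5 ≤ A.card) (h : A.card ≤ (twoSum A).card) :
    ∃ B ⊆ A, B.card = (A.card + 3) / 2 ∧ A.card ≤ (twoSum B).card := by
  by_contra hcon
  push_neg at hcon
  -- abbreviations (kept explicit)
  have hNval : (A.powersetCard ((A.card + 3) / 2)).card
      = (A.card).choose ((A.card + 3) / 2) := Finset.card_powersetCard _ _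
  have hNpos : 0 < (A.powersetCard ((A.card + 3) / 2)).card := by
    rw [hNval]
    exact Nat.choose_pos (by omega)
  have hHpos : 0 < A.card / 2 := by omega
  -- upper bound on the sum
  have hupper : ∑ B ∈ A.powersetCard ((A.card + 3) / 2), (twoSum B).card
      ≤ (A.powersetCard ((A.card + 3) / 2)).card * (A.card - 1) := by
    calc ∑ B ∈ A.powersetCard ((A.card + 3) / 2), (twoSum B).card
        ≤ ∑ _B ∈ A.powersetCard ((A.card + 3) / 2), (A.card - 1) := by
          apply Finset.sum_le_sum
          intro B hB
          obtain ⟨hBA, hBcard⟩ := Finset.mem_powersetCard.1 hB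
          have := hcon B hBA hBcard
          omega
      _ = _ := by rw [Finset.sum_const, smul_eq_mul]
  -- swap the double sum
  have hswap : ∑ B ∈ A.powersetCard ((A.card + 3) / 2), (twoSum B).card
      = ∑ v ∈ twoSum A, ((A.powersetCard ((A.card + 3) / 2)).filter
          (fun B => v ∈ twoSum B)).card := by
    have hterm : ∀ B ∈ A.powersetCard ((A.card + 3) / 2),
        (twoSum B).card = ((twoSum A).filter (fun v => v ∈ twoSum B)).card := by
      intro B hB
      have hBA := (Finset.mem_powersetCard.1 hB).1
      have : (twoSum A).filter (fun v => v ∈ twoSum B) = twoSum B := by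
        ext v
        simp only [Finset.mem_filter]
        exact ⟨fun hv => hv.2, fun hv => ⟨twoSum_mono hBA hv, hv⟩⟩
      rw [this]
    rw [Finset.sum_congr rfl hterm]
    simp only [Finset.card_filter]
    exact Finset.sum_comm
  -- core bound summed
  have hcore : ∑ v ∈ twoSum A,
      (edges A v).card * (A.powersetCard ((A.card + 3) / 2)).card
      ≤ ∑ v ∈ twoSum A, (A.card / 2) * ((A.powersetCard ((A.card + 3) / 2)).filter
          (fun B => v ∈ twoSum B)).card :=
    Finset.sum_le_sum (fun v hv => cov_core A hA v hv)
  have hsumedges : ∑ v ∈ twoSum A,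
      (edges A v).card * (A.powersetCard ((A.card + 3) / 2)).card
      = (A.card).choose 2 * (A.powersetCard ((A.card + 3) / 2)).card := by
    rw [← Finset.sum_mul, sum_card_edges]
  rcases Nat.even_or_odd A.card with heven | hodd
  · -- even case
    have hmod : A.card % 2 = 0 := Nat.even_iff.1 heven
    have hchoose : (A.card).choose 2 = (A.card - 1) * (A.card / 2) :=
      choose_two_even _ hmod
    -- find v₀ with small edge count
    have hv0 : ∃ v₀ ∈ twoSum A, (edges A v₀).card + 1 ≤ A.card / 2 := by
      by_contra hno
      push_neg at hno
      have hbig : ∀ v ∈ twoSum A, A.card / 2 ≤ (edges A v).card := by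
        intro v hv
        have := hno v hv
        omega
      have hlow : (twoSum A).card * (A.card / 2) ≤ ∑ v ∈ twoSum A, (edges A v).card := by
        calc (twoSum A).card * (A.card / 2)
            = ∑ _v ∈ twoSum A, (A.card / 2) := by rw [Finset.sum_const, smul_eq_mul]
          _ ≤ _ := Finset.sum_le_sum hbig
      rw [sum_card_edges, hchoose] at hlow
      have h1 : A.card * (A.card / 2) ≤ (twoSum A).card * (A.card / 2) :=
        Nat.mul_le_mul_right _ h
      have h2 : (A.card - 1) * (A.card / 2) < A.card * (A.card / 2) :=
        (Nat.mul_lt_mul_right hHpos).2 (by omega)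
      omega
    obtain ⟨v₀, hv₀, hv₀small⟩ := hv0
    -- refined pointwise bound with bonus at v₀
    have hrefined : ∑ v ∈ twoSum A,
        ((edges A v).card * (A.powersetCard ((A.card + 3) / 2)).card
          + (if v = v₀ then A.card / 2 else 0))
        ≤ ∑ v ∈ twoSum A, (A.card / 2) * ((A.powersetCard ((A.card + 3) / 2)).filter
            (fun B => v ∈ twoSum B)).card := by
      apply Finset.sum_le_sum
      intro v hv
      split_ifs with hveq
      · subst hveq
        exact cov_bonus A (by omega) v hv hv₀small
      · rw [Nat.add_zero]
        exact cov_core A hA v hv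
    rw [Finset.sum_add_distrib, Finset.sum_ite_eq' (twoSum A) v₀ (fun _ => A.card / 2),
      if_pos hv₀, hsumedges] at hrefined
    -- combine everything
    rw [hswap] at hupper
    have hmul : (A.card / 2) * (∑ v ∈ twoSum A,
        ((A.powersetCard ((A.card + 3) / 2)).filter (fun B => v ∈ twoSum B)).card)
        ≤ (A.card / 2) * ((A.powersetCard ((A.card + 3) / 2)).card * (A.card - 1)) :=
      Nat.mul_le_mul_left _ hupper
    rw [← Finset.mul_sum] at hrefined
    have halign : (A.card).choose 2 * (A.powersetCard ((A.card + 3) / 2)).card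
        = (A.card / 2) * ((A.powersetCard ((A.card + 3) / 2)).card * (A.card - 1)) := by
      rw [hchoose]; ring
    omega
  · -- odd case
    have hmod : A.card % 2 = 1 := Nat.odd_iff.1 hodd
    have hchoose : (A.card).choose 2 = A.card * (A.card / 2) :=
      choose_two_odd _ hmod
    rw [hsumedges] at hcore
    rw [← Finset.mul_sum] at hcore
    rw [hswap] at hupper
    have hmul : (A.card / 2) * (∑ v ∈ twoSum A,
        ((A.powersetCard ((A.card + 3) / 2)).filter (fun B => v ∈ twoSum B)).card)
        ≤ (A.card / 2) * ((A.powersetCard ((A.card + 3) / 2)).card * (A.card - 1)) :=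
      Nat.mul_le_mul_left _ hupper
    have halign : (A.card).choose 2 * (A.powersetCard ((A.card + 3) / 2)).card
        = (A.card / 2) * ((A.powersetCard ((A.card + 3) / 2)).card * A.card) := by
      rw [hchoose]; ring
    have hstrict : (A.card / 2) * ((A.powersetCard ((A.card + 3) / 2)).card * (A.card - 1))
        < (A.card / 2) * ((A.powersetCard ((A.card + 3) / 2)).card * A.card) := by
      apply (Nat.mul_lt_mul_left hHpos).2
      apply (Nat.mul_lt_mul_left hNpos).2
      omega
    omega

end TwoSumProof

theorem stmt9 {G : Type*} [AddCommGroup G] [DecidableEq G] (A : Finset G)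
    (hA : 5 ≤ A.card) (h : A.card ≤ (twoSum A).card) :
    ∃ B ⊆ A, B.card = (A.card + 3) / 2 ∧ A.card ≤ (twoSum B).card := by
  exact TwoSumProof.main A hA h
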